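/- arXiv:2106.02173 — 2 statements merged into one kernel-verified Lean document; each statement's English description precedes it below -/
import Mathlib

section
/- Let G be a finite simple graph without isolated vertices, with minimum degree δ, and let a > 0 be a real number. Then ISD_a(G) ≤ (1/2)·δ^{-a}·AG(G), and equality holds if and only if G is regular. -/
open Finset Real

/-- The variable inverse sum deg index
`ISD_a(G) = Σ_{uv ∈ E(G)} 1/(d_u^a + d_v^a)`. -/
noncomputable def ISD {V : Type*} [Fintype V] [DecidableEq V] (G : SimpleGraph V)
    [DecidableRel G.Adj] (a : ℝ) : ℝ :=
  ∑ e ∈ G.edgeFinset,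
    Sym2.lift ⟨fun u v => 1 / ((G.degree u : ℝ) ^ a + (G.degree v : ℝ) ^ a),
      fun u v => by simp [add_comm]⟩ e

/-- The arithmetic-geometric index `AG(G) = Σ_{uv ∈ E(G)} (d_u + d_v)/(2√(d_u d_v))`. -/
noncomputable def arithGeomIdx {V : Type*} [Fintype V] [DecidableEq V] (G : SimpleGraph V)
    [DecidableRel G.Adj] : ℝ :=
  ∑ e ∈ G.edgeFinset,
    Sym2.lift ⟨fun u v => ((G.degree u : ℝ) + (G.degree v : ℝ)) /
        (2 * Real.sqrt ((G.degree u : ℝ) * (G.degree v : ℝ))),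
      fun u v => by dsimp only; rw [mul_comm ((G.degree u : ℝ)), add_comm ((G.degree u : ℝ))]⟩ e

lemma key_ineq {a d x y : ℝ} (ha : 0 < a) (hd : 0 < d) (hx : d ≤ x) (hy : d ≤ y) :
    1 / (x ^ a + y ^ a) ≤ 1 / 2 * d ^ (-a) * ((x + y) / (2 * Real.sqrt (x * y))) := by
  have hx0 : 0 < x := hd.trans_le hx
  have hy0 : 0 < y := hd.trans_le hy
  have hda : 0 < d ^ a := Real.rpow_pos_of_pos hd a
  have hxa : d ^ a ≤ x ^ a := Real.rpow_le_rpow hd.le hx ha.le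
  have hya : d ^ a ≤ y ^ a := Real.rpow_le_rpow hd.le hy ha.le
  have hs : 0 < Real.sqrt (x * y) := Real.sqrt_pos.mpr (mul_pos hx0 hy0)
  have hA : 1 ≤ (x + y) / (2 * Real.sqrt (x * y)) := by
    rw [le_div_iff₀ (by positivity)]
    have h2 : 2 * Real.sqrt x * Real.sqrt y ≤ (Real.sqrt x)^2 + (Real.sqrt y)^2 :=
      two_mul_le_add_sq _ _
    rw [Real.sqrt_mul hx0.le]
    rw [Real.sq_sqrt hx0.le, Real.sq_sqrt hy0.le] at h2
    nlinarith
  have hneg : d ^ (-a) = (d ^ a)⁻¹ := Real.rpow_neg hd.le a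
  calc 1 / (x ^ a + y ^ a) ≤ 1 / (2 * d ^ a) :=
        one_div_le_one_div_of_le (by positivity) (by linarith)
    _ = 1 / 2 * d ^ (-a) * 1 := by rw [hneg]; field_simp
    _ ≤ 1 / 2 * d ^ (-a) * ((x + y) / (2 * Real.sqrt (x * y))) :=
        mul_le_mul_of_nonneg_left hA (by positivity)

lemma key_strict {a d x y : ℝ} (ha : 0 < a) (hd : 0 < d) (hx : d ≤ x) (hy : d ≤ y)
    (h : x ≠ d ∨ y ≠ d) :
    1 / (x ^ a + y ^ a) < 1 / 2 * d ^ (-a) * ((x + y) / (2 * Real.sqrt (x * y))) := by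
  have hx0 : 0 < x := hd.trans_le hx
  have hy0 : 0 < y := hd.trans_le hy
  have hda : 0 < d ^ a := Real.rpow_pos_of_pos hd a
  have hxa : d ^ a ≤ x ^ a := Real.rpow_le_rpow hd.le hx ha.le
  have hya : d ^ a ≤ y ^ a := Real.rpow_le_rpow hd.le hy ha.le
  have hsum : 2 * d ^ a < x ^ a + y ^ a := by
    rcases h with h | h
    · have : d ^ a < x ^ a := Real.rpow_lt_rpow hd.le (lt_of_le_of_ne hx (Ne.symm h)) ha
      linarith
    · have : d ^ a < y ^ a := Real.rpow_lt_rpow hd.le (lt_of_le_of_ne hy (Ne.symm h)) ha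
      linarith
  have hs : 0 < Real.sqrt (x * y) := Real.sqrt_pos.mpr (mul_pos hx0 hy0)
  have hA : 1 ≤ (x + y) / (2 * Real.sqrt (x * y)) := by
    rw [le_div_iff₀ (by positivity)]
    have h2 : 2 * Real.sqrt x * Real.sqrt y ≤ (Real.sqrt x)^2 + (Real.sqrt y)^2 :=
      two_mul_le_add_sq _ _
    rw [Real.sqrt_mul hx0.le]
    rw [Real.sq_sqrt hx0.le, Real.sq_sqrt hy0.le] at h2
    nlinarith
  have hneg : d ^ (-a) = (d ^ a)⁻¹ := Real.rpow_neg hd.le a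
  calc 1 / (x ^ a + y ^ a) < 1 / (2 * d ^ a) :=
        one_div_lt_one_div_of_lt (by positivity) hsum
    _ = 1 / 2 * d ^ (-a) * 1 := by rw [hneg]; field_simp
    _ ≤ 1 / 2 * d ^ (-a) * ((x + y) / (2 * Real.sqrt (x * y))) :=
        mul_le_mul_of_nonneg_left hA (by positivity)

lemma key_eq {a d : ℝ} (hd : 0 < d) :
    1 / (d ^ a + d ^ a) = 1 / 2 * d ^ (-a) * ((d + d) / (2 * Real.sqrt (d * d))) := by
  have hda : 0 < d ^ a := Real.rpow_pos_of_pos hd a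
  rw [Real.sqrt_mul_self hd.le, Real.rpow_neg hd.le]
  field_simp
  ring

theorem stmt_11 {V : Type*} [Fintype V] [DecidableEq V] [Nonempty V] (G : SimpleGraph V)
    [DecidableRel G.Adj] (hiso : ∀ v : V, 0 < G.degree v) (a : ℝ) (ha : 0 < a) :
    ((ISD G a ≤ 1 / 2 * (G.minDegree : ℝ) ^ (-a) * arithGeomIdx G) ∧
    (ISD G a = 1 / 2 * (G.minDegree : ℝ) ^ (-a) * arithGeomIdx G ↔ ∃ k, ∀ v : V, G.degree v = k)) := by
  obtain ⟨w, hw⟩ := G.exists_minimal_degree_vertex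
  have hdn : 0 < G.minDegree := hw ▸ hiso w
  have hd : (0 : ℝ) < (G.minDegree : ℝ) := by exact_mod_cast hdn
  set F : Sym2 V → ℝ := Sym2.lift ⟨fun u v => 1 / ((G.degree u : ℝ) ^ a + (G.degree v : ℝ) ^ a),
      fun u v => by simp [add_comm]⟩ with hF
  set A : Sym2 V → ℝ := Sym2.lift ⟨fun u v => ((G.degree u : ℝ) + (G.degree v : ℝ)) /
        (2 * Real.sqrt ((G.degree u : ℝ) * (G.degree v : ℝ))),
      fun u v => by dsimp only; rw [mul_comm ((G.degree u : ℝ)), add_comm ((G.degree u : ℝ))]⟩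
    with hA
  have hISD : ISD G a = ∑ e ∈ G.edgeFinset, F e := rfl
  have hAG : arithGeomIdx G = ∑ e ∈ G.edgeFinset, A e := rfl
  have hle : ∀ e ∈ G.edgeFinset, F e ≤ 1 / 2 * (G.minDegree : ℝ) ^ (-a) * A e := by
    intro e _
    induction e using Sym2.ind with
    | _ u v =>
      have hu : (G.minDegree : ℝ) ≤ (G.degree u : ℝ) := by
        exact_mod_cast G.minDegree_le_degree u
      have hv : (G.minDegree : ℝ) ≤ (G.degree v : ℝ) := by
        exact_mod_cast G.minDegree_le_degree v
      simpa [hF, hA] using key_ineq ha hd hu hv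
  have hsumle : ISD G a ≤ 1 / 2 * (G.minDegree : ℝ) ^ (-a) * arithGeomIdx G := by
    rw [hISD, hAG, Finset.mul_sum]
    exact Finset.sum_le_sum hle
  refine ⟨hsumle, ?_, ?_⟩
  · intro heq
    have hall : ∀ e ∈ G.edgeFinset, F e = 1 / 2 * (G.minDegree : ℝ) ^ (-a) * A e := by
      rw [← Finset.sum_eq_sum_iff_of_le hle, ← Finset.mul_sum, ← hISD, ← hAG]
      exact heq
    refine ⟨G.minDegree, fun v => ?_⟩
    obtain ⟨u, hadj⟩ : ∃ u, G.Adj v u := (G.degree_pos_iff_exists_adj v).mp (hiso v)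
    have hmem : s(v, u) ∈ G.edgeFinset := by
      rw [SimpleGraph.mem_edgeFinset]; exact hadj
    have heq' := hall _ hmem
    by_contra hne
    have hne' : (G.degree v : ℝ) ≠ (G.minDegree : ℝ) := by exact_mod_cast hne
    have hu' : (G.minDegree : ℝ) ≤ (G.degree v : ℝ) := by
      exact_mod_cast G.minDegree_le_degree v
    have hv' : (G.minDegree : ℝ) ≤ (G.degree u : ℝ) := by
      exact_mod_cast G.minDegree_le_degree u
    have hlt := key_strict ha hd hu' hv' (Or.inl hne')
    simp only [hF, hA, Sym2.lift_mk] at heq'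
    linarith
  · rintro ⟨k, hk⟩
    have hδk : G.minDegree = k := by rw [hw, hk w]
    have hdeg : ∀ v : V, (G.degree v : ℝ) = (G.minDegree : ℝ) := by
      intro v; rw [hk v, hδk]
    rw [hISD, hAG, Finset.mul_sum]
    apply Finset.sum_congr rfl
    intro e _
    induction e using Sym2.ind with
    | _ u v =>
      simp only [hF, hA, Sym2.lift_mk, hdeg u, hdeg v]
      exact key_eq hd
end

section
/- Let G be a finite simple graph without isolated vertices with m edges and minimum degree δ > 1, and let a be a real number with a ≤ -log 2/log δ. Then ISD_a(G) + M_1^{a+1}(G) ≥ (2δ^a + 1/(2δ^a))·m, and equality holds if and only if G is regular. -/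
open Finset Real

/-- The variable first Zagreb index `M₁^α(G) = Σ_{u ∈ V(G)} d_u^α`. -/
noncomputable def varZagreb1 {V : Type*} [Fintype V] (G : SimpleGraph V)
    [DecidableRel G.Adj] (α : ℝ) : ℝ :=
  ∑ u : V, (G.degree u : ℝ) ^ α

lemma edge_sum_eq_dart_sum {V : Type*} [Fintype V] [DecidableEq V] (G : SimpleGraph V)
    [DecidableRel G.Adj] (f : V → ℝ) :
    ∑ e ∈ G.edgeFinset,
      Sym2.lift ⟨fun u v => f u + f v, fun u v => by simp [add_comm]⟩ e =
    ∑ d : G.Dart, f d.fst := by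
  rw [← Finset.sum_fiberwise_of_maps_to (s := Finset.univ) (t := G.edgeFinset)
    (g := SimpleGraph.Dart.edge) (f := fun d : G.Dart => f d.fst)
    (fun d _ => by rw [SimpleGraph.mem_edgeFinset]; exact d.edge_mem)]
  refine Finset.sum_congr rfl fun e he => ?_
  rw [SimpleGraph.mem_edgeFinset] at he
  induction' e with u v
  have hadj : G.Adj u v := he
  let d : G.Dart := ⟨(u, v), hadj⟩
  have : (Finset.univ.filter fun d' : G.Dart => d'.edge = SimpleGraph.Dart.edge d)
      = {d, d.symm} := SimpleGraph.Dart.edge_fiber d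
  rw [show s(u, v) = d.edge from rfl, this,
    Finset.sum_pair d.symm_ne.symm]
  simp [d, SimpleGraph.Dart.symm]

lemma dart_sum_eq_vert_sum {V : Type*} [Fintype V] [DecidableEq V] (G : SimpleGraph V)
    [DecidableRel G.Adj] (f : V → ℝ) :
    ∑ d : G.Dart, f d.fst = ∑ v : V, (G.degree v : ℝ) * f v := by
  rw [← Finset.sum_fiberwise_of_maps_to (s := Finset.univ) (t := Finset.univ)
    (g := fun d : G.Dart => d.fst) (f := fun d : G.Dart => f d.fst)
    (fun d _ => Finset.mem_univ _)]
  refine Finset.sum_congr rfl fun v _ => ?_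
  have h1 : ∀ d ∈ Finset.univ.filter (fun d : G.Dart => d.fst = v),
      f d.fst = f v := fun d hd => by rw [(Finset.mem_filter.1 hd).2]
  rw [Finset.sum_congr rfl h1, Finset.sum_const,
    G.dart_fst_fiber_card_eq_degree v, nsmul_eq_mul]

/-- The key scalar inequality: for `0 < t ≤ s ≤ 1`, `s + 1/s ≤ 1/t + t`,
with equality iff `t = s`. -/
lemma key_scalar {s t : ℝ} (ht : 0 < t) (hts : t ≤ s) (hs1 : s ≤ 1) :
    s + 1 / s ≤ 1 / t + t ∧ (1 / t + t = s + 1 / s ↔ t = s) := by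
  have hs : 0 < s := lt_of_lt_of_le ht hts
  have hdiff : (1 / t + t) - (s + 1 / s) = (s - t) * (1 - s * t) / (s * t) := by
    field_simp
    ring
  have hnum : 0 ≤ (s - t) * (1 - s * t) := by
    apply mul_nonneg (by linarith)
    nlinarith
  have hquot : 0 ≤ (s - t) * (1 - s * t) / (s * t) :=
    div_nonneg hnum (by positivity)
  constructor
  · linarith
  · constructor
    · intro h
      by_contra hne
      have hlt : t < s := lt_of_le_of_ne hts hne
      have ht1 : t < 1 := lt_of_lt_of_le hlt hs1
      have hnum' : 0 < (s - t) * (1 - s * t) := by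
        apply mul_pos (by linarith)
        nlinarith
      have : 0 < (s - t) * (1 - s * t) / (s * t) := div_pos hnum' (by positivity)
      have h0 : (s - t) * (1 - s * t) / (s * t) = 0 := by rw [← hdiff]; linarith
      linarith
    · rintro rfl
      ring

theorem stmt_16 {V : Type*} [Fintype V] [DecidableEq V] [Nonempty V] (G : SimpleGraph V)
    [DecidableRel G.Adj] (hiso : ∀ v : V, 0 < G.degree v) (hδ : 1 < G.minDegree) (a : ℝ)
    (ha : a ≤ -(Real.log 2 / Real.log (G.minDegree : ℝ))) :
    (((2 * (G.minDegree : ℝ) ^ a + 1 / (2 * (G.minDegree : ℝ) ^ a)) * (G.edgeFinset.card : ℝ) ≤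
      ISD G a + varZagreb1 G (a + 1)) ∧
    (ISD G a + varZagreb1 G (a + 1) =
        (2 * (G.minDegree : ℝ) ^ a + 1 / (2 * (G.minDegree : ℝ) ^ a)) * (G.edgeFinset.card : ℝ) ↔
      ∃ k, ∀ v : V, G.degree v = k)) := by
  set δ := G.minDegree with hδdef
  have hδ2 : (2 : ℝ) ≤ (δ : ℝ) := by exact_mod_cast hδ
  have hδpos : (0 : ℝ) < (δ : ℝ) := by linarith
  have hlogδ : 0 < Real.log (δ : ℝ) := Real.log_pos (by linarith)
  have hlog2 : 0 < Real.log 2 := Real.log_pos (by norm_num)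
  have ha0 : a < 0 := lt_of_le_of_lt ha (by
    rw [neg_lt, neg_zero]; positivity)
  set D : ℝ := (δ : ℝ) ^ a with hDdef
  have hDpos : 0 < D := Real.rpow_pos_of_pos hδpos a
  have hD : D ≤ 1 / 2 := by
    have h1 : a * Real.log (δ : ℝ) ≤ -Real.log 2 := by
      have h := mul_le_mul_of_nonneg_right ha hlogδ.le
      have h2 : -(Real.log 2 / Real.log (δ : ℝ)) * Real.log (δ : ℝ) = -Real.log 2 := by
        field_simp
      linarith
    have h2 : D = Real.exp (Real.log (δ : ℝ) * a) := Real.rpow_def_of_pos hδpos a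
    rw [h2, mul_comm]
    calc Real.exp (a * Real.log (δ : ℝ)) ≤ Real.exp (-Real.log 2) :=
          Real.exp_le_exp.2 h1
      _ = 1 / 2 := by
          rw [Real.exp_neg, Real.exp_log (by norm_num : (0:ℝ) < 2)]
          norm_num
  -- per-vertex bounds
  have hxpos : ∀ v : V, 0 < ((G.degree v : ℝ)) ^ a := fun v =>
    Real.rpow_pos_of_pos (by exact_mod_cast hiso v) a
  have hdegle : ∀ v : V, (δ : ℝ) ≤ (G.degree v : ℝ) := fun v => by
    exact_mod_cast G.minDegree_le_degree v
  have hxle : ∀ v : V, ((G.degree v : ℝ)) ^ a ≤ D := fun v =>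
    Real.rpow_le_rpow_of_nonpos hδpos (hdegle v) ha0.le
  have hxeq : ∀ v : V, ((G.degree v : ℝ)) ^ a = D → G.degree v = δ := by
    intro v h
    by_contra hne
    have hlt : (δ : ℝ) < (G.degree v : ℝ) := by
      rcases lt_or_eq_of_le (hdegle v) with h' | h'
      · exact h'
      · exact absurd (by exact_mod_cast h'.symm) hne
    have := Real.rpow_lt_rpow_of_neg hδpos hlt ha0
    rw [h] at this
    exact lt_irrefl _ this
  -- sym2 lifts
  set F : Sym2 V → ℝ := fun e => Sym2.lift ⟨fun u v =>
    ((G.degree u : ℝ)) ^ a + ((G.degree v : ℝ)) ^ a, fun u v => by simp [add_comm]⟩ e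
    with hFdef
  have hISD : ISD G a = ∑ e ∈ G.edgeFinset, 1 / F e := by
    unfold ISD
    refine Finset.sum_congr rfl fun e _ => ?_
    induction' e with u v
    simp [hFdef]
  have hZag : varZagreb1 G (a + 1) = ∑ e ∈ G.edgeFinset, F e := by
    calc varZagreb1 G (a + 1)
        = ∑ v : V, (G.degree v : ℝ) * ((G.degree v : ℝ)) ^ a := by
          unfold varZagreb1
          refine Finset.sum_congr rfl fun v _ => ?_
          rw [Real.rpow_add (by exact_mod_cast hiso v), Real.rpow_one]
          ring
      _ = ∑ d : G.Dart, ((G.degree d.fst : ℝ)) ^ a :=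
          (dart_sum_eq_vert_sum G (fun u => ((G.degree u : ℝ)) ^ a)).symm
      _ = ∑ e ∈ G.edgeFinset, F e :=
          (edge_sum_eq_dart_sum G (fun u => ((G.degree u : ℝ)) ^ a)).symm
  -- per-edge bounds
  have hFbound : ∀ e ∈ G.edgeFinset, 0 < F e ∧ F e ≤ 2 * D := by
    intro e he
    induction' e with u v
    constructor
    · simp only [hFdef, Sym2.lift_mk]
      have := hxpos u; have := hxpos v; linarith
    · simp only [hFdef, Sym2.lift_mk]
      have := hxle u; have := hxle v; linarith
  have h2D1 : 2 * D ≤ 1 := by linarith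
  have hkey : ∀ e ∈ G.edgeFinset,
      2 * D + 1 / (2 * D) ≤ 1 / F e + F e ∧
      (1 / F e + F e = 2 * D + 1 / (2 * D) ↔ F e = 2 * D) := fun e he =>
    key_scalar (hFbound e he).1 (hFbound e he).2 h2D1
  have hsum : ISD G a + varZagreb1 G (a + 1) =
      ∑ e ∈ G.edgeFinset, (1 / F e + F e) := by
    rw [hISD, hZag, ← Finset.sum_add_distrib]
  have hconst : (2 * D + 1 / (2 * D)) * (G.edgeFinset.card : ℝ) =
      ∑ _e ∈ G.edgeFinset, (2 * D + 1 / (2 * D)) := by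
    rw [Finset.sum_const, nsmul_eq_mul, mul_comm]
  constructor
  · rw [hsum, hconst]
    exact Finset.sum_le_sum fun e he => (hkey e he).1
  · rw [hsum, hconst]
    rw [eq_comm, Finset.sum_eq_sum_iff_of_le fun e he => (hkey e he).1]
    constructor
    · intro h
      refine ⟨δ, fun v => ?_⟩
      obtain ⟨w, hw⟩ := (G.degree_pos_iff_exists_adj v).1 (hiso v)
      have hmem : s(v, w) ∈ G.edgeFinset := by
        rw [SimpleGraph.mem_edgeFinset]; exact hw
      have heq : F s(v, w) = 2 * D :=
        ((hkey _ hmem).2).1 ((h _ hmem).symm)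
      simp only [hFdef, Sym2.lift_mk] at heq
      have hv := hxle v; have hwle := hxle w
      exact hxeq v (by linarith)
    · rintro ⟨k, hk⟩
      intro e he
      obtain ⟨v0, hv0⟩ := G.exists_minimal_degree_vertex
      have hkδ : k = δ := by rw [hδdef, hv0, hk v0]
      refine (((hkey e he).2).2 ?_).symm
      induction' e with u v
      simp only [hFdef, Sym2.lift_mk]
      rw [hk u, hk v, hkδ]
      ring
end
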